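/- Under the assumptions of the previous lemma (in particular $u^L(\mathbf{x},j) < M_{-j}$, $u^L(\mathbf{x},j) \geq V$, $U_j(\mathbf{x}) \neq \emptyset$, and $\mathbf{y}^* \in \overline{U_j(\mathbf{x})}$ attains $V$), define $S = \{\ell \in [n]\setminus\{j\} : u^L(\mathbf{y}^*,\ell) = V\}$. Then for every $\mathbf{y} \in U_j(\mathbf{x})$ it holds that $\min_{\ell \in S} u^L(\mathbf{y},\ell) < V$. -/

import Mathlib

open Finset

noncomputable section

def simplex (m : ℕ) : Set (Fin m → ℝ) := stdSimplex ℝ (Fin m)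

def util {m n : ℕ} (u : Fin m → Fin n → ℝ) (y : Fin m → ℝ) (j : Fin n) : ℝ :=
  ∑ i, y i * u i j

lemma util_comb {m n : ℕ} (u : Fin m → Fin n → ℝ) (a b : ℝ) (y z : Fin m → ℝ) (ℓ : Fin n) :
    util u (a • y + b • z) ℓ = a * util u y ℓ + b * util u z ℓ := by
  simp [util, Pi.add_apply, Pi.smul_apply, smul_eq_mul, add_mul, Finset.sum_add_distrib,
    Finset.mul_sum, mul_assoc]

lemma util_cont {m n : ℕ} (u : Fin m → Fin n → ℝ) (j : Fin n) :
    Continuous fun z : Fin m → ℝ => util u z j := by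
  unfold util
  exact continuous_finset_sum _ fun i _ => (continuous_apply i).mul continuous_const

/-- Lemma: $\min_{\ell \in S} u^L(y, \ell) < V$ for all $y \in U_j(x)$. -/
theorem stmt_10 (m n : ℕ) (hn : 2 ≤ n) (uL : Fin m → Fin n → ℝ)
    (x : Fin m → ℝ) (hx : x ∈ simplex m) (j : Fin n)
    (hMj : ∃ z ∈ simplex m, ∀ ℓ, ℓ ≠ j → util uL x j < util uL z ℓ)
    (hU : ∃ y ∈ simplex m, util uL x j < util uL y j)
    (V : ℝ) (ystar : Fin m → ℝ)
    (hystar : ystar ∈ closure {z | z ∈ simplex m ∧ util uL x j < util uL z j})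
    (hmin1 : ∀ ℓ, ℓ ≠ j → V ≤ util uL ystar ℓ)
    (hmin2 : ∃ ℓ, ℓ ≠ j ∧ util uL ystar ℓ = V)
    (hVmax : ∀ y ∈ closure {z | z ∈ simplex m ∧ util uL x j < util uL z j},
      ∃ ℓ, ℓ ≠ j ∧ util uL y ℓ ≤ V)
    (hxV : V ≤ util uL x j) :
    ∀ y ∈ simplex m, util uL x j < util uL y j →
      ∃ ℓ, ℓ ≠ j ∧ util uL ystar ℓ = V ∧ util uL y ℓ < V := by
  intro y hy hyj
  by_contra hcon
  push_neg at hcon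
  -- hcon : ∀ ℓ, ℓ ≠ j → util uL ystar ℓ = V → V ≤ util uL y ℓ
  obtain ⟨z, hz, hzℓ⟩ := hMj
  -- basic facts about ystar
  have hys_sim : ystar ∈ simplex m :=
    closure_minimal (fun w hw => hw.1) (isClosed_stdSimplex ℝ (Fin m)) hystar
  have husj : util uL x j ≤ util uL ystar j :=
    closure_minimal (fun w hw => le_of_lt hw.2)
      (isClosed_le continuous_const (util_cont uL j)) hystar
  have hgeV : ∀ ℓ, V ≤ util uL ystar ℓ := by
    intro ℓ
    by_cases hℓ : ℓ = j
    · subst hℓ; linarith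
    · exact hmin1 ℓ hℓ
  -- pick ε and build w
  set d : ℝ := util uL y j - util uL x j with hd_def
  have hd : 0 < d := by simp [hd_def]; linarith
  set c : ℝ := util uL x j - util uL z j with hc_def
  set ε : ℝ := min (1/2) (d / (2 * (1 + |c|))) with hε_def
  have hcabs : 0 ≤ |c| := abs_nonneg c
  have hε0 : 0 < ε := by
    apply lt_min (by norm_num)
    exact div_pos hd (by linarith)
  have hεhalf : ε ≤ 1/2 := min_le_left _ _
  have hεd : ε * (2 * (1 + |c|)) ≤ d := by
    have := min_le_right (1/2) (d / (2 * (1 + |c|)))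
    rw [← hε_def] at this
    calc ε * (2 * (1 + |c|)) ≤ (d / (2 * (1 + |c|))) * (2 * (1 + |c|)) := by
          apply mul_le_mul_of_nonneg_right this (by linarith)
      _ = d := by field_simp
  set w : Fin m → ℝ := (1 - ε) • y + ε • z with hw_def
  have hw_sim : w ∈ simplex m :=
    convex_stdSimplex ℝ (Fin m) hy hz (by linarith) (le_of_lt hε0) (by ring)
  have hwj : util uL x j < util uL w j := by
    rw [hw_def, util_comb]
    have hc_le : c ≤ |c| := le_abs_self c
    nlinarith [mul_nonneg hε0.le hcabs]
  have hwS : ∀ ℓ, ℓ ≠ j → util uL ystar ℓ = V → V < util uL w ℓ := by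
    intro ℓ hℓ hℓV
    have h1 : V ≤ util uL y ℓ := hcon ℓ hℓ hℓV
    have h2 : V < util uL z ℓ := lt_of_le_of_lt hxV (hzℓ ℓ hℓ)
    rw [hw_def, util_comb]
    nlinarith
  -- step sizes
  set τ : Fin n → ℝ := fun ℓ =>
    if util uL ystar ℓ = V then 1
    else (util uL ystar ℓ - V) / ((util uL ystar ℓ - V) + max 0 (V - util uL w ℓ) + 1)
    with hτ_def
  have hτpos : ∀ ℓ, 0 < τ ℓ := by
    intro ℓ
    rw [hτ_def]
    by_cases hℓ : util uL ystar ℓ = V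
    · simp [hℓ]
    · simp only [hℓ, if_false]
      have hg : 0 < util uL ystar ℓ - V := by
        have := hgeV ℓ
        rcases lt_or_eq_of_le this with h | h
        · linarith
        · exact absurd h.symm hℓ
      exact div_pos hg (by positivity)
  have hτle1 : ∀ ℓ, τ ℓ ≤ 1 := by
    intro ℓ
    rw [hτ_def]
    by_cases hℓ : util uL ystar ℓ = V
    · simp [hℓ]
    · simp only [hℓ, if_false]
      have hg : 0 < util uL ystar ℓ - V := by
        have := hgeV ℓ
        rcases lt_or_eq_of_le this with h | h
        · linarith
        · exact absurd h.symm hℓ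
      have hM : (0:ℝ) ≤ max 0 (V - util uL w ℓ) := le_max_left _ _
      rw [div_le_one (by positivity)]
      linarith
  have hne : Nonempty (Fin n) := ⟨⟨0, by omega⟩⟩
  set t0 : ℝ := Finset.univ.inf' Finset.univ_nonempty τ with ht0_def
  have ht0pos : 0 < t0 := by
    rw [ht0_def, Finset.lt_inf'_iff]
    exact fun ℓ _ => hτpos ℓ
  have ht0le : ∀ ℓ, t0 ≤ τ ℓ := fun ℓ => Finset.inf'_le τ (Finset.mem_univ ℓ)
  have ht01 : t0 ≤ 1 := le_trans (ht0le ⟨0, by omega⟩) (hτle1 _)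
  -- the point p
  set p : Fin m → ℝ := (1 - t0) • ystar + t0 • w with hp_def
  have hp_sim : p ∈ simplex m :=
    convex_stdSimplex ℝ (Fin m) hys_sim hw_sim (by linarith) (le_of_lt ht0pos) (by ring)
  have hpj : util uL x j < util uL p j := by
    rw [hp_def, util_comb]
    nlinarith
  have hp_cl : p ∈ closure {z | z ∈ simplex m ∧ util uL x j < util uL z j} :=
    subset_closure ⟨hp_sim, hpj⟩
  obtain ⟨ℓ, hℓj, hℓle⟩ := hVmax p hp_cl
  -- contradiction: util p ℓ > V
  have : V < util uL p ℓ := by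
    rw [hp_def, util_comb]
    by_cases hℓV : util uL ystar ℓ = V
    · have := hwS ℓ hℓj hℓV
      rw [hℓV]
      nlinarith
    · have hg : 0 < util uL ystar ℓ - V := by
        have := hgeV ℓ
        rcases lt_or_eq_of_le this with h | h
        · linarith
        · exact absurd h.symm hℓV
      set g : ℝ := util uL ystar ℓ - V with hg_def
      set M : ℝ := max 0 (V - util uL w ℓ) with hM_def
      have hM0 : 0 ≤ M := le_max_left _ _
      have hM1 : V - util uL w ℓ ≤ M := le_max_right _ _
      have hτℓ : τ ℓ = g / (g + M + 1) := by rw [hτ_def]; simp [hℓV, hg_def, hM_def]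
      have ht0τ : t0 ≤ g / (g + M + 1) := by rw [← hτℓ]; exact ht0le ℓ
      have h2 : t0 * (g + M + 1) ≤ g := by
        rw [← le_div_iff₀ (by positivity)]; exact ht0τ
      have h1 : t0 * (V - util uL w ℓ) ≤ t0 * M :=
        mul_le_mul_of_nonneg_left hM1 ht0pos.le
      nlinarith
  linarith
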